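/- Coefficient support of a type-A column tableau: let j₁ < ⋯ < j_k in {1,...,n+1}, s ∈ ℤ, and T = [j₁,...,j_k]^A_s. Set j₀ = 0 and j_{k+1} = n+2. Then for (m, j) ∈ ℤ_{≥1} × I, the coefficient of x_{m,j} in T is nonzero if and only if either (m,j) = (s+k−i+P(j_i), j_i) for some i with j_{i+1} > j_i + 1 (coefficient +1), or (m,j) = (s+k−i+1+P(j_i−1), j_i−1) for some i with j_i − 1 > j_{i−1} (coefficient −1). -/

import Mathlib

/-! Combinatorics of an adapted sequence `ι` for a classical Lie algebra, and the
column-tableau linear forms of Kanakubo–Nakashima in re-indexed coordinates `x_{m,j}`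
(the coordinate for the `m`-th occurrence of the index `j` in `ι`). -/

noncomputable section

/-- First position `m ≥ 1` with `ι m ∈ {i, j}`. -/
def firstBoth (ι : ℕ → ℕ) (i j : ℕ) : ℕ := sInf {m | 1 ≤ m ∧ (ι m = i ∨ ι m = j)}

/-- `p_{i,j} = 1` if `i` occurs before `j` in `ι`, and `0` otherwise. -/
def pOf (ι : ℕ → ℕ) (i j : ℕ) : ℕ := if ι (firstBoth ι i j) = i then 1 else 0

/-- `ι⁽ⁱ⁾`, the first position of `ι` at which `i` occurs. -/
def firstOcc (ι : ℕ → ℕ) (i : ℕ) : ℕ := sInf {m | 1 ≤ m ∧ ι m = i}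

/-- `P(k) = p_{2,1} + p_{3,2} + ⋯ + p_{k,k-1}` (so `P 0 = P 1 = 0`). -/
def Pof (ι : ℕ → ℕ) (k : ℕ) : ℕ := ∑ i ∈ Finset.Icc 2 k, pOf ι i (i - 1)

/-- The condition that every index `1,…,n` occurs infinitely often in `ι` and
consecutive entries of `ι` differ. -/
def SeqCond (n : ℕ) (ι : ℕ → ℕ) : Prop :=
  (∀ m, 1 ≤ m → 1 ≤ ι m ∧ ι m ≤ n) ∧
  (∀ m, 1 ≤ m → ι m ≠ ι (m + 1)) ∧
  (∀ i, 1 ≤ i → i ≤ n → ∀ N : ℕ, ∃ m, N < m ∧ ι m = i)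

/-- `ι` is adapted to the type `A_n` Cartan matrix: for adjacent indices `i, j`, any two
consecutive members of the subsequence of `ι` consisting of `i`'s and `j`'s differ. -/
def AdaptedA (n : ℕ) (ι : ℕ → ℕ) : Prop :=
  ∀ i j : ℕ, 1 ≤ i → i ≤ n → 1 ≤ j → j ≤ n → (i = j + 1 ∨ j = i + 1) →
    ∀ m m' : ℕ, 1 ≤ m → m < m' → (ι m = i ∨ ι m = j) → (ι m' = i ∨ ι m' = j) →
      (∀ r, m < r → r < m' → ι r ≠ i ∧ ι r ≠ j) → ι m ≠ ι m'

/-- Linear forms on `ℚ^∞`, presented by their coefficients in the re-indexed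
coordinates `x_{m,j}`. -/
abbrev LinF : Type := ℤ × ℕ → ℚ

/-- The coordinate functional `x_{m,j}` (zero when `m ≤ 0`, `j = 0` or `j > n`). -/
def XT (n : ℕ) (m : ℤ) (j : ℕ) : LinF :=
  fun q => if q = (m, j) ∧ 1 ≤ m ∧ 1 ≤ j ∧ j ≤ n then 1 else 0

/-- The box `⌈j⌉^A_s = x_{s+P(j),j} − x_{s+P(j−1)+1,j−1}` of type `A_n`. -/
def boxA (n : ℕ) (ι : ℕ → ℕ) (j : ℕ) (s : ℤ) : LinF :=
  XT n (s + (Pof ι j : ℤ)) j - XT n (s + (Pof ι (j - 1) : ℤ) + 1) (j - 1)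

/-- The column tableau `[j₁,…,j_k]^A_s = Σ_{i=1}^k ⌈j_i⌉^A_{s+k−i}` (here `j` is
`0`-indexed: `j ⟨0⟩ = j₁, …`). -/
def tabA (n : ℕ) (ι : ℕ → ℕ) {k : ℕ} (j : Fin k → ℕ) (s : ℤ) : LinF :=
  ∑ i : Fin k, boxA n ι (j i) (s + (k : ℤ) - 1 - ((i : ℕ) : ℤ))

/-- The Nakashima–Zelevinsky form `β_{m,j}` in re-indexed coordinates, for `ι` adapted
to a type `A` Cartan matrix:
`β_{m,j} = x_{m,j} + x_{m+1,j} − x_{m+p_{j−1,j},j−1} − x_{m+p_{j+1,j},j+1}`. -/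
def betaA (n : ℕ) (ι : ℕ → ℕ) (m : ℤ) (j : ℕ) : LinF :=
  XT n m j + XT n (m + 1) j - XT n (m + (pOf ι (j - 1) j : ℤ)) (j - 1)
    - XT n (m + (pOf ι (j + 1) j : ℤ)) (j + 1)

/-- Affine-linear forms: a constant term together with a linear form. -/
abbrev AffF : Type := ℚ × LinF

/-- The form `β⁽⁻⁾_{m,j}` in re-indexed coordinates: `β_{m−1,j}` when `m ≥ 2`, and the
`λ`-dependent form with constant term `−⟨h_j, λ⟩` when `m = 1`. -/
def betaMA (n : ℕ) (ι : ℕ → ℕ) (lam : ℕ → ℤ) (m : ℤ) (j : ℕ) : AffF :=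
  ((if m = 1 then -(lam j : ℚ) else 0), betaA n ι (m - 1) j)

/-- The operator `Ŝ_{m,j}` of the polyhedral realization of `B(λ)` in re-indexed
coordinates. -/
def ShatA (n : ℕ) (ι : ℕ → ℕ) (lam : ℕ → ℤ) (m : ℤ) (j : ℕ) (φ : AffF) : AffF :=
  if 0 < φ.2 (m, j) then φ - φ.2 (m, j) • (((0 : ℚ), betaA n ι m j) : AffF)
  else φ - φ.2 (m, j) • betaMA n ι lam m j

end


section Aux

private lemma XT_apply (n : ℕ) (x : ℤ) (y : ℕ) (m : ℤ) (jj : ℕ)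
    (hm1 : 1 ≤ m) (hjj1 : 1 ≤ jj) (hjjn : jj ≤ n) :
    XT n x y (m, jj) = if m = x ∧ jj = y then 1 else 0 := by
  unfold XT
  by_cases h : m = x ∧ jj = y
  · obtain ⟨h1, h2⟩ := h
    subst h1; subst h2
    simp [hm1, hjj1, hjjn]
  · rw [if_neg, if_neg h]
    simp only [Prod.mk.injEq]
    tauto

private lemma box_eval (n : ℕ) (ι : ℕ → ℕ) (jv : ℕ) (hjv : 1 ≤ jv) (s' m : ℤ) (jj : ℕ)
    (hm1 : 1 ≤ m) (hjj1 : 1 ≤ jj) (hjjn : jj ≤ n) :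
    boxA n ι jv s' (m, jj) =
      (if jv = jj ∧ m = s' + (Pof ι jj : ℤ) then (1:ℚ) else 0)
      - (if jv = jj + 1 ∧ m = s' + (Pof ι jj : ℤ) + 1 then (1:ℚ) else 0) := by
  have h1 := XT_apply n (s' + (Pof ι jv : ℤ)) jv m jj hm1 hjj1 hjjn
  have h2 := XT_apply n (s' + (Pof ι (jv-1) : ℤ) + 1) (jv-1) m jj hm1 hjj1 hjjn
  simp only [boxA, Pi.sub_apply]
  rw [h1, h2]
  congr 1
  · apply if_congr _ rfl rfl
    constructor
    · rintro ⟨hm', hj'⟩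
      subst hj'
      exact ⟨rfl, hm'⟩
    · rintro ⟨hj', hm'⟩
      subst hj'
      exact ⟨hm', rfl⟩
  · apply if_congr _ rfl rfl
    constructor
    · rintro ⟨hm', hj'⟩
      have hPeq : jv - 1 = jj := by omega
      rw [hPeq] at hm'
      exact ⟨by omega, hm'⟩
    · rintro ⟨hj', hm'⟩
      have hPeq : jv - 1 = jj := by omega
      rw [hPeq]
      exact ⟨hm', by omega⟩

private lemma sum_ite_unique {k : ℕ} (C : Fin k → Prop) [DecidablePred C]
    (h : ∀ a b, C a → C b → a = b) :
    (∑ a : Fin k, (if C a then (1:ℚ) else 0)) = if ∃ a, C a then 1 else 0 := by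
  by_cases he : ∃ a, C a
  · obtain ⟨a, ha⟩ := he
    rw [if_pos ⟨a, ha⟩, Finset.sum_eq_single a]
    · simp [ha]
    · intro b _ hb
      exact if_neg fun hc => hb (h b a hc ha)
    · simp
  · rw [if_neg he]
    exact Finset.sum_eq_zero fun a _ => if_neg (fun hc => he ⟨a, hc⟩)

private lemma tabA_eval (n : ℕ) (ι : ℕ → ℕ) (k : ℕ) (j : Fin k → ℕ)
    (hmono : StrictMono j) (hrange : ∀ i, 1 ≤ j i ∧ j i ≤ n + 1) (s : ℤ)
    (m : ℤ) (jj : ℕ) (hm1 : 1 ≤ m) (hjj1 : 1 ≤ jj) (hjjn : jj ≤ n) :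
    tabA n ι j s (m, jj) =
      (if ∃ a : Fin k, j a = jj ∧ m = s + (k:ℤ) - 1 - ((a:ℕ):ℤ) + (Pof ι jj : ℤ) then 1 else 0)
      - (if ∃ a : Fin k, j a = jj + 1 ∧ m = s + (k:ℤ) - 1 - ((a:ℕ):ℤ) + (Pof ι jj : ℤ) + 1
          then 1 else 0) := by
  classical
  have hsum : tabA n ι j s (m, jj)
      = ∑ a : Fin k, boxA n ι (j a) (s + (k:ℤ) - 1 - ((a:ℕ):ℤ)) (m, jj) := by
    simp [tabA, Finset.sum_apply]
  rw [hsum]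
  have hrw : ∀ a : Fin k,
      boxA n ι (j a) (s + (k:ℤ) - 1 - ((a:ℕ):ℤ)) (m, jj)
        = (if j a = jj ∧ m = s + (k:ℤ) - 1 - ((a:ℕ):ℤ) + (Pof ι jj : ℤ) then (1:ℚ) else 0)
          - (if j a = jj + 1 ∧ m = s + (k:ℤ) - 1 - ((a:ℕ):ℤ) + (Pof ι jj : ℤ) + 1
              then (1:ℚ) else 0) := fun a =>
    box_eval n ι (j a) (hrange a).1 _ m jj hm1 hjj1 hjjn
  rw [Finset.sum_congr rfl (fun a _ => hrw a), Finset.sum_sub_distrib,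
    sum_ite_unique _ (fun a b ha hb => hmono.injective (ha.1.trans hb.1.symm)),
    sum_ite_unique _ (fun a b ha hb => hmono.injective (ha.1.trans hb.1.symm))]

private lemma key1 (n : ℕ) (ι : ℕ → ℕ) (k : ℕ) (j : Fin k → ℕ) (hmono : StrictMono j)
    (s m : ℤ) (jj : ℕ) :
    (∃ a : Fin k, jj = j a ∧
        m = s + (k : ℤ) - 1 - ((a : ℕ) : ℤ) + (Pof ι (j a) : ℤ) ∧
        ∀ a' : Fin k, (a' : ℕ) = (a : ℕ) + 1 → j a + 1 < j a') ↔
      ((∃ a : Fin k, j a = jj ∧ m = s + (k:ℤ) - 1 - ((a:ℕ):ℤ) + (Pof ι jj : ℤ)) ∧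
       ¬ (∃ a : Fin k, j a = jj + 1 ∧ m = s + (k:ℤ) - 1 - ((a:ℕ):ℤ) + (Pof ι jj : ℤ) + 1)) := by
  constructor
  · rintro ⟨a, hj, hm, hgap⟩
    subst hj
    refine ⟨⟨a, rfl, hm⟩, ?_⟩
    rintro ⟨b, hjb, hmb⟩
    have hlt : j a < j b := by omega
    have hab : a < b := hmono.lt_iff_lt.mp hlt
    have hba : (b:ℕ) = (a:ℕ) + 1 := by omega
    have := hgap b hba
    omega
  · rintro ⟨⟨a, hj, hm⟩, hnM⟩
    refine ⟨a, hj.symm, by rw [hj]; exact hm, ?_⟩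
    intro a' ha'
    by_contra hcon
    have hlt : a < a' := by
      rw [Fin.lt_def]; omega
    have hlt' : j a < j a' := hmono hlt
    have hja' : j a' = jj + 1 := by omega
    exact hnM ⟨a', hja', by omega⟩

private lemma key2 (n : ℕ) (ι : ℕ → ℕ) (k : ℕ) (j : Fin k → ℕ) (hmono : StrictMono j)
    (s m : ℤ) (jj : ℕ) (hjj1 : 1 ≤ jj) :
    (∃ a : Fin k, jj = j a - 1 ∧
        m = s + (k : ℤ) - ((a : ℕ) : ℤ) + (Pof ι (j a - 1) : ℤ) ∧
        ((a : ℕ) = 0 → 1 < j a) ∧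
        ∀ a' : Fin k, (a' : ℕ) + 1 = (a : ℕ) → j a' + 1 < j a) ↔
      ((∃ a : Fin k, j a = jj + 1 ∧ m = s + (k:ℤ) - 1 - ((a:ℕ):ℤ) + (Pof ι jj : ℤ) + 1) ∧
       ¬ (∃ a : Fin k, j a = jj ∧ m = s + (k:ℤ) - 1 - ((a:ℕ):ℤ) + (Pof ι jj : ℤ))) := by
  constructor
  · rintro ⟨a, hj, hm, h0, hgap⟩
    have hja : j a = jj + 1 := by omega
    have hPeq : j a - 1 = jj := by omega
    rw [hPeq] at hm
    refine ⟨⟨a, hja, by omega⟩, ?_⟩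
    rintro ⟨b, hjb, hmb⟩
    have hlt : j b < j a := by omega
    have hab : b < a := hmono.lt_iff_lt.mp hlt
    have hba : (b:ℕ) + 1 = (a:ℕ) := by omega
    have := hgap b hba
    omega
  · rintro ⟨⟨a, hja, hm⟩, hnP⟩
    have hPeq : j a - 1 = jj := by omega
    refine ⟨a, by omega, by rw [hPeq]; omega, by omega, ?_⟩
    intro a' ha'
    by_contra hcon
    have hlt : a' < a := by
      rw [Fin.lt_def]; omega
    have hlt' : j a' < j a := hmono hlt
    have hja' : j a' = jj := by omega
    exact hnP ⟨a', hja', by omega⟩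

end Aux

/-- Coefficient support of a type-`A` column tableau.  For `j₁ < ⋯ < j_k` in `{1,…,n+1}`
(`0`-indexed `a ↦ j_{a+1}`), `T = [j₁,…,j_k]^A_s`, and `(m, jj) ∈ ℤ_{≥1} × I`:
the coefficient of `x_{m,jj}` in `T` is nonzero iff either
`(m,jj) = (s+k−i+P(j_i), j_i)` for some `i = a+1` with `j_{i+1} > j_i + 1`
(coefficient `+1`; convention `j_{k+1} = n+2`), or
`(m,jj) = (s+k−i+1+P(j_i−1), j_i−1)` for some `i = a+1` with `j_i − 1 > j_{i−1}`
(coefficient `−1`; convention `j₀ = 0`). -/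
theorem tabA_support (n : ℕ) (ι : ℕ → ℕ)
    (hseq : SeqCond n ι) (had : AdaptedA n ι)
    (k : ℕ) (hk : 1 ≤ k) (j : Fin k → ℕ) (hmono : StrictMono j)
    (hrange : ∀ i, 1 ≤ j i ∧ j i ≤ n + 1) (s : ℤ)
    (m : ℤ) (jj : ℕ) (hm1 : 1 ≤ m) (hjj1 : 1 ≤ jj) (hjjn : jj ≤ n) :
    (tabA n ι j s (m, jj) ≠ 0 ↔
      ((∃ a : Fin k, jj = j a ∧
          m = s + (k : ℤ) - 1 - ((a : ℕ) : ℤ) + (Pof ι (j a) : ℤ) ∧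
          ∀ a' : Fin k, (a' : ℕ) = (a : ℕ) + 1 → j a + 1 < j a') ∨
       (∃ a : Fin k, jj = j a - 1 ∧
          m = s + (k : ℤ) - ((a : ℕ) : ℤ) + (Pof ι (j a - 1) : ℤ) ∧
          ((a : ℕ) = 0 → 1 < j a) ∧
          ∀ a' : Fin k, (a' : ℕ) + 1 = (a : ℕ) → j a' + 1 < j a))) ∧
    (∀ a : Fin k, jj = j a →
        m = s + (k : ℤ) - 1 - ((a : ℕ) : ℤ) + (Pof ι (j a) : ℤ) →
        (∀ a' : Fin k, (a' : ℕ) = (a : ℕ) + 1 → j a + 1 < j a') →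
        tabA n ι j s (m, jj) = 1) ∧
    (∀ a : Fin k, jj = j a - 1 →
        m = s + (k : ℤ) - ((a : ℕ) : ℤ) + (Pof ι (j a - 1) : ℤ) →
        ((a : ℕ) = 0 → 1 < j a) →
        (∀ a' : Fin k, (a' : ℕ) + 1 = (a : ℕ) → j a' + 1 < j a) →
        tabA n ι j s (m, jj) = -1) := by
  classical
  have hval := tabA_eval n ι k j hmono hrange s m jj hm1 hjj1 hjjn
  have k1 := key1 n ι k j hmono s m jj
  have k2 := key2 n ι k j hmono s m jj hjj1
  refine ⟨?_, ?_, ?_⟩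
  · rw [hval, k1, k2]
    split_ifs with hP hM hM <;> simp [hP, hM]
  · intro a hj hm hgap
    have hPM := k1.mp ⟨a, hj, hm, hgap⟩
    rw [hval, if_pos hPM.1, if_neg hPM.2]
    norm_num
  · intro a hj hm h0 hgap
    have hPM := k2.mp ⟨a, hj, hm, h0, hgap⟩
    rw [hval, if_neg hPM.2, if_pos hPM.1]
    norm_num
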